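/- arXiv:2001.10786 — 2 statements merged into one kernel-verified Lean document; each statement's English description precedes it below -/
import Mathlib

section
/- (Robbins–Siegmund) Let {F_n} be a filtration and let v_n, a_n, b_n, c_n be nonnegative random variables adapted to F_n satisfying E[v_{n+1} | F_n] ≤ v_n(1 + a_n) + b_n − c_n for all n. If ∑ a_n < ∞ and ∑ b_n < ∞ almost surely, then almost surely the sequence {v_n} converges and ∑ c_n < ∞. -/
open MeasureTheory Filter

/-- Robbins–Siegmund lemma: for a filtration `ℱ` and nonnegative adapted random
variables `v, a, b, c` with `E[v_{n+1} | ℱ_n] ≤ v_n (1 + a_n) + b_n − c_n` and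
`∑ a_n < ∞`, `∑ b_n < ∞` a.s., almost surely `v_n` converges and `∑ c_n < ∞`. -/
theorem stmt2 {Ω : Type*} {m : MeasurableSpace Ω} {μ : Measure Ω} [IsProbabilityMeasure μ]
    (ℱ : Filtration ℕ m) (v a b c : ℕ → Ω → ℝ)
    (hv_nonneg : ∀ n, 0 ≤ᵐ[μ] v n) (ha_nonneg : ∀ n, 0 ≤ᵐ[μ] a n)
    (hb_nonneg : ∀ n, 0 ≤ᵐ[μ] b n) (hc_nonneg : ∀ n, 0 ≤ᵐ[μ] c n)
    (hv_adapted : Adapted ℱ v) (ha_adapted : Adapted ℱ a)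
    (hb_adapted : Adapted ℱ b) (hc_adapted : Adapted ℱ c)
    (hv_int : ∀ n, Integrable (v n) μ) (ha_int : ∀ n, Integrable (a n) μ)
    (hb_int : ∀ n, Integrable (b n) μ) (hc_int : ∀ n, Integrable (c n) μ)
    (hineq : ∀ n, μ[v (n + 1) | ℱ n] ≤ᵐ[μ] fun ω => v n ω * (1 + a n ω) + b n ω - c n ω)
    (ha_sum : ∀ᵐ ω ∂μ, Summable (fun n => a n ω))
    (hb_sum : ∀ᵐ ω ∂μ, Summable (fun n => b n ω)) :
    ∀ᵐ ω ∂μ, (∃ l : ℝ, Tendsto (fun n => v n ω) atTop (nhds l)) ∧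
      Summable (fun n => c n ω) := by
  classical
  -- auxiliary processes
  set g : ℕ → Ω → ℝ := fun n ω => max 1 (1 + a n ω) with hg_def
  set A : ℕ → Ω → ℝ := fun n ω => ∏ k ∈ Finset.range n, g k ω with hA_def
  have hg_one : ∀ n ω, 1 ≤ g n ω := fun n ω => le_max_left _ _
  have hA_succ : ∀ n ω, A (n + 1) ω = A n ω * g n ω := fun n ω =>
    Finset.prod_range_succ _ _
  have hA_one : ∀ n ω, 1 ≤ A n ω := by
    intro n ω
    induction n with
    | zero => simp [hA_def]
    | succ k ih =>
      rw [hA_succ k ω]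
      nlinarith [hg_one k ω]
  have hA_pos : ∀ n ω, 0 < A n ω := fun n ω => lt_of_lt_of_le one_pos (hA_one n ω)
  have hAinv_le_one : ∀ n ω, (A n ω)⁻¹ ≤ 1 := fun n ω =>
    inv_le_one_of_one_le₀ (hA_one n ω)
  have hAinv_nonneg : ∀ n ω, 0 ≤ (A n ω)⁻¹ := fun n ω => inv_nonneg.2 (hA_pos n ω).le
  have hA_mono : ∀ ω, Monotone fun n => A n ω := by
    intro ω
    apply monotone_nat_of_le_succ
    intro n
    rw [hA_succ n ω]
    nlinarith [hg_one n ω, hA_pos n ω]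
  have hg_meas : ∀ n, StronglyMeasurable[ℱ n] (g n) := by
    intro n
    exact (measurable_const.max
      (measurable_const.add (ha_adapted n))).stronglyMeasurable
  have hA_meas : ∀ N n, n ≤ N + 1 → StronglyMeasurable[ℱ N] (A n) := by
    intro N n hn
    apply Finset.stronglyMeasurable_fun_prod
    intro k hk
    have hk' : k ≤ N := by simp only [Finset.mem_range] at hk; omega
    exact (hg_meas k).mono (ℱ.mono hk')
  have hAinv_meas : ∀ N n, n ≤ N + 1 → StronglyMeasurable[ℱ N] fun ω => (A n ω)⁻¹ := by
    intro N n hn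
    exact ((hA_meas N n hn).measurable.inv).stronglyMeasurable
  set C : ℕ → Ω → ℝ := fun n ω => ∑ k ∈ Finset.range n, c k ω * (A (k + 1) ω)⁻¹ with hC_def
  set B : ℕ → Ω → ℝ := fun n ω => ∑ k ∈ Finset.range n, b k ω * (A (k + 1) ω)⁻¹ with hB_def
  set u : ℕ → Ω → ℝ := fun n ω => v n ω * (A n ω)⁻¹ + C n ω - B n ω with hu_def
  -- measurability of the sums
  have hsum_meas : ∀ (f : ℕ → Ω → ℝ), Adapted ℱ f → ∀ N n, n ≤ N + 1 →
      StronglyMeasurable[ℱ N] (fun ω => ∑ k ∈ Finset.range n, f k ω * (A (k + 1) ω)⁻¹) := by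
    intro f hf N n hn
    apply Finset.stronglyMeasurable_fun_sum
    intro k hk
    have hk' : k ≤ N := by simp only [Finset.mem_range] at hk; omega
    exact ((hf k).stronglyMeasurable.mono (ℱ.mono hk')).mul (hAinv_meas N (k + 1) (by omega))
  -- integrability
  have hmul_int : ∀ (f : Ω → ℝ) (k : ℕ), Integrable f μ → AEStronglyMeasurable f μ →
      Integrable (fun ω => f ω * (A k ω)⁻¹) μ := by
    intro f k hfi hfm
    refine hfi.mono (hfm.mul (((hAinv_meas k k (Nat.le_succ k)).mono (ℱ.le k)).aestronglyMeasurable)) ?_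
    refine Filter.Eventually.of_forall fun ω => ?_
    rw [norm_mul, Real.norm_eq_abs ((A k ω)⁻¹), abs_of_nonneg (hAinv_nonneg k ω)]
    calc ‖f ω‖ * (A k ω)⁻¹ ≤ ‖f ω‖ * 1 :=
          mul_le_mul_of_nonneg_left (hAinv_le_one k ω) (norm_nonneg _)
      _ = ‖f ω‖ := mul_one _
  have hvA_int : ∀ n, Integrable (fun ω => v n ω * (A n ω)⁻¹) μ := fun n =>
    hmul_int (v n) n (hv_int n) (hv_int n).1
  have hC_int : ∀ n, Integrable (C n) μ := by
    intro n
    apply integrable_finset_sum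
    intro k _
    exact hmul_int (c k) (k + 1) (hc_int k) (hc_int k).1
  have hB_int : ∀ n, Integrable (B n) μ := by
    intro n
    apply integrable_finset_sum
    intro k _
    exact hmul_int (b k) (k + 1) (hb_int k) (hb_int k).1
  have hu_int : ∀ n, Integrable (u n) μ := fun n =>
    (((hvA_int n).add (hC_int n)).sub (hB_int n))
  have hu_adapted : Adapted ℱ u := by
    intro n
    exact ((((hv_adapted n).stronglyMeasurable.mul (hAinv_meas n n (Nat.le_succ n))).add
      (hsum_meas c hc_adapted n n (Nat.le_succ n))).sub (hsum_meas b hb_adapted n n (Nat.le_succ n))).measurable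
  -- supermartingale property
  have hu_step : ∀ n, μ[u (n + 1)|ℱ n] ≤ᵐ[μ] u n := by
    intro n
    have hf2meas : StronglyMeasurable[ℱ n] (fun ω => C (n + 1) ω - B (n + 1) ω) :=
      (hsum_meas c hc_adapted n (n + 1) le_rfl).sub (hsum_meas b hb_adapted n (n + 1) le_rfl)
    have hf2int : Integrable (fun ω => C (n + 1) ω - B (n + 1) ω) μ :=
      (hC_int (n + 1)).sub (hB_int (n + 1))
    have h1int : Integrable ((fun ω => (A (n + 1) ω)⁻¹) * v (n + 1)) μ := by
      have := hmul_int (v (n + 1)) (n + 1) (hv_int (n + 1)) (hv_int (n + 1)).1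
      refine this.congr (Filter.Eventually.of_forall fun ω => ?_)
      simp [mul_comm]
    have hmul_eq : u (n + 1) = (fun ω => (A (n + 1) ω)⁻¹) * v (n + 1) +
        fun ω => C (n + 1) ω - B (n + 1) ω := by
      funext ω
      simp only [hu_def, Pi.add_apply, Pi.mul_apply]
      ring
    have e1 : μ[u (n + 1)|ℱ n] =ᵐ[μ]
        μ[(fun ω => (A (n + 1) ω)⁻¹) * v (n + 1)|ℱ n] +
          μ[(fun ω => C (n + 1) ω - B (n + 1) ω)|ℱ n] := by
      rw [hmul_eq]
      exact condExp_add h1int hf2int _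
    have e2 : μ[(fun ω => (A (n + 1) ω)⁻¹) * v (n + 1)|ℱ n] =ᵐ[μ]
        (fun ω => (A (n + 1) ω)⁻¹) * μ[v (n + 1)|ℱ n] :=
      condExp_mul_of_stronglyMeasurable_left (hAinv_meas n (n + 1) le_rfl) h1int (hv_int (n + 1))
    have e3 : μ[(fun ω => C (n + 1) ω - B (n + 1) ω)|ℱ n] =ᵐ[μ]
        fun ω => C (n + 1) ω - B (n + 1) ω :=
      Filter.EventuallyEq.of_eq (condExp_of_stronglyMeasurable (ℱ.le n) hf2meas hf2int)
    filter_upwards [e1, e2, e3, hineq n, ha_nonneg n, hb_nonneg n, hc_nonneg n, hv_nonneg n]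
      with ω h1 h2 h3 h4 ha0 hb0 hc0 hv0
    simp only [Pi.add_apply, Pi.mul_apply, Pi.zero_apply] at h1 h2 h3 ha0 hb0 hc0 hv0 ⊢
    rw [h1, h2, h3]
    have hgn : g n ω = 1 + a n ω := max_eq_right (by linarith)
    have hA1 : A (n + 1) ω = A n ω * (1 + a n ω) := by rw [hA_succ n ω, hgn]
    have hCs : C (n + 1) ω = C n ω + c n ω * (A (n + 1) ω)⁻¹ := Finset.sum_range_succ _ _
    have hBs : B (n + 1) ω = B n ω + b n ω * (A (n + 1) ω)⁻¹ := Finset.sum_range_succ _ _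
    have hApos := hA_pos n ω
    have hAne : A n ω ≠ 0 := ne_of_gt hApos
    have htpos : (0 : ℝ) < 1 + a n ω := by linarith
    have htne : (1 : ℝ) + a n ω ≠ 0 := ne_of_gt htpos
    have hinv_nonneg : 0 ≤ (A (n + 1) ω)⁻¹ := hAinv_nonneg (n + 1) ω
    have key : (A (n + 1) ω)⁻¹ * (v n ω * (1 + a n ω) + b n ω - c n ω) +
        (C (n + 1) ω - B (n + 1) ω) = v n ω * (A n ω)⁻¹ + C n ω - B n ω := by
      rw [hCs, hBs, hA1]
      field_simp
      ring
    have hle : (A (n + 1) ω)⁻¹ * (μ[v (n + 1)|ℱ n]) ω ≤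
        (A (n + 1) ω)⁻¹ * (v n ω * (1 + a n ω) + b n ω - c n ω) :=
      mul_le_mul_of_nonneg_left h4 hinv_nonneg
    simp only [hu_def]
    linarith [key]
  have hu_super : Supermartingale u ℱ μ := supermartingale_nat hu_adapted.stronglyAdapted hu_int hu_step
  -- stopped processes and convergence for each level M
  have key : ∀ M : ℕ, ∀ᵐ ω ∂μ, ∃ L : ℝ, Tendsto
      (fun n => u (min n (hittingBtwn (fun k ω => B (k + 1) ω) (Set.Ioi (M : ℝ)) 0 n ω)) ω)
      atTop (nhds L) := by
    intro M
    set P : ℕ → Ω → ℝ := fun k ω => B (k + 1) ω with hP_def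
    have hP_adapted : Adapted ℱ P := fun n => (hsum_meas b hb_adapted n (n + 1) le_rfl).measurable
    set τ : ℕ → Ω → ℕ := fun N => hittingBtwn P (Set.Ioi (M : ℝ)) 0 N with hτ_def
    have hτ_stop : ∀ N, IsStoppingTime ℱ (fun ω => (τ N ω : WithTop ℕ)) := fun N =>
      hP_adapted.isStoppingTime_hittingBtwn measurableSet_Ioi
    have hstop_super : ∀ N, Supermartingale (stoppedProcess u (fun ω => (τ N ω : WithTop ℕ))) ℱ μ := by
      intro N
      have h := ((hu_super.neg.stoppedProcess (hτ_stop N)).neg)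
      have heq : -(stoppedProcess (-u) (fun ω => (τ N ω : WithTop ℕ))) = stoppedProcess u (fun ω => (τ N ω : WithTop ℕ)) := by
        funext n ω
        simp [stoppedProcess]
      rwa [heq] at h
    have hmin : ∀ (n N : ℕ) (ω : Ω), n ≤ N → min n (τ N ω) = min n (τ n ω) := by
      intro n N ω hnN
      by_cases h : ∃ j ∈ Set.Icc 0 n, P j ω ∈ Set.Ioi (M : ℝ)
      · rw [hτ_def]
        simp only
        rw [hittingBtwn_eq_hittingBtwn_of_exists hnN h]
      · have h1 : τ n ω = n := by
          rw [hτ_def]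
          simp only [hittingBtwn]
          rw [if_neg h]
        have h2 : n ≤ τ N ω := by
          by_contra h2
          push_neg at h2
          have hlt : τ N ω < N := lt_of_lt_of_le h2 hnN
          have hmem := hittingBtwn_mem_set_of_hittingBtwn_lt hlt
          exact h ⟨τ N ω, ⟨Nat.zero_le _, h2.le⟩, hmem⟩
        rw [h1, min_eq_left h2, min_self]
    set w : ℕ → Ω → ℝ := fun n ω => u (min n (τ n ω)) ω with hw_def
    have hw_eq : ∀ n N, n ≤ N → w n = stoppedProcess u (fun ω => (τ N ω : WithTop ℕ)) n := by
      intro n N h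
      funext ω
      show u (min n (τ n ω)) ω = u (min (n : WithTop ℕ) (τ N ω)).untopA ω
      have hc : (min (n : WithTop ℕ) (τ N ω)) = ((min n (τ N ω) : ℕ) : WithTop ℕ) := by
        rcases le_total n (τ N ω) with h' | h' <;> simp [h']
      rw [hc]
      exact congrArg (fun k => u k ω) (hmin n N ω h).symm
    have hw_super : Supermartingale w ℱ μ := by
      refine ⟨fun n => ?_, fun i j hij => ?_, fun n => ?_⟩
      · rw [hw_eq n n le_rfl]
        exact (hstop_super n).1 n
      · have h := (hstop_super j).2.1 i j hij
        rw [← hw_eq j j le_rfl, ← hw_eq i j hij] at h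
        exact h
      · rw [hw_eq n n le_rfl]
        exact (hstop_super n).2.2 n
    have hae : ∀ᵐ ω ∂μ, ∀ k, 0 ≤ v k ω ∧ 0 ≤ b k ω ∧ 0 ≤ c k ω := by
      apply ae_all_iff.2
      intro k
      filter_upwards [hv_nonneg k, hb_nonneg k, hc_nonneg k] with ω h1 h2 h3
      exact ⟨h1, h2, h3⟩
    have hw_lb : ∀ᵐ ω ∂μ, ∀ n, -(M : ℝ) ≤ w n ω := by
      filter_upwards [hae] with ω h0
      intro n
      set q := min n (τ n ω) with hq
      have hBle : B q ω ≤ M := by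
        rcases Nat.eq_zero_or_pos q with hq0 | hq0
        · rw [hq0]
          simp only [hB_def, Finset.range_zero, Finset.sum_empty]
          exact_mod_cast Nat.zero_le M
        · have hlt : q - 1 < τ n ω := lt_of_lt_of_le (Nat.sub_lt hq0 one_pos) (min_le_right _ _)
          have hnm := notMem_of_lt_hittingBtwn hlt (Nat.zero_le _)
          simp only [Set.mem_Ioi, not_lt] at hnm
          have hq1 : q - 1 + 1 = q := Nat.succ_pred_eq_of_pos hq0
          have hBq : P (q - 1) ω = B q ω := by
            show B (q - 1 + 1) ω = B q ω
            rw [hq1]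
          rw [← hBq]
          exact hnm
      have h1 : 0 ≤ v q ω * (A q ω)⁻¹ := mul_nonneg (h0 q).1 (hAinv_nonneg q ω)
      have h2 : 0 ≤ C q ω := Finset.sum_nonneg fun k _ =>
        mul_nonneg (h0 k).2.2 (hAinv_nonneg (k + 1) ω)
      have : w n ω = v q ω * (A q ω)⁻¹ + C q ω - B q ω := rfl
      rw [this]
      linarith
    have hInt_le : ∀ n, ∫ ω, w n ω ∂μ ≤ ∫ ω, w 0 ω ∂μ := by
      intro n
      have h := hw_super.2.1 0 n (Nat.zero_le n)
      calc ∫ ω, w n ω ∂μ = ∫ ω, (μ[w n|ℱ 0]) ω ∂μ := (integral_condExp (ℱ.le 0)).symm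
        _ ≤ ∫ ω, w 0 ω ∂μ := integral_mono_ae integrable_condExp (hw_super.2.2 0) h
    set R : ℝ := ∫ ω, w 0 ω ∂μ + 2 * M with hR
    have hbdd : ∀ n, eLpNorm (w n) 1 μ ≤ ENNReal.ofReal R := by
      intro n
      have hwint := hw_super.2.2 n
      rw [eLpNorm_one_eq_lintegral_enorm, ← ofReal_integral_norm_eq_lintegral_enorm hwint]
      apply ENNReal.ofReal_le_ofReal
      have h1 : ∫ ω, ‖w n ω‖ ∂μ ≤ ∫ ω, (w n ω + 2 * M) ∂μ := by
        apply integral_mono_ae hwint.norm (hwint.add (integrable_const _))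
        filter_upwards [hw_lb] with ω h
        have hn := h n
        simp only [Pi.add_apply]
        show ‖w n ω‖ ≤ w n ω + 2 * (M : ℝ)
        rw [Real.norm_eq_abs]
        have hM0 : (0 : ℝ) ≤ M := Nat.cast_nonneg M
        rcases abs_cases (w n ω) with ⟨he, _⟩ | ⟨he, _⟩ <;> linarith
      have h2 : ∫ ω, (w n ω + 2 * (M : ℝ)) ∂μ = ∫ ω, w n ω ∂μ + 2 * M := by
        rw [integral_add hwint (integrable_const _), integral_const]
        simp
      rw [hR]
      linarith [hInt_le n]
    have hbdd' : ∀ n, eLpNorm ((-w) n) 1 μ ≤ ((ENNReal.ofReal R).toNNReal : ENNReal) := by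
      intro n
      have : eLpNorm ((-w) n) 1 μ = eLpNorm (w n) 1 μ := by
        have : (-w) n = -(w n) := rfl
        rw [this, eLpNorm_neg]
      rw [this, ENNReal.coe_toNNReal (by simp)]
      exact hbdd n
    have hconv := hw_super.neg.exists_ae_tendsto_of_bdd hbdd'
    filter_upwards [hconv] with ω hω
    obtain ⟨L, hL⟩ := hω
    refine ⟨-L, ?_⟩
    have : (fun n => u (min n (τ n ω)) ω) = fun n => -((-w) n ω) := by
      funext n
      simp [hw_def]
    rw [show (fun n => u (min n (hittingBtwn (fun k ω => B (k + 1) ω) (Set.Ioi (M : ℝ)) 0 n ω)) ω)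
        = fun n => -((-w) n ω) from this]
    exact hL.neg
  -- combine
  have haeall : ∀ᵐ ω ∂μ, ∀ k, 0 ≤ v k ω ∧ 0 ≤ a k ω ∧ 0 ≤ b k ω ∧ 0 ≤ c k ω := by
    apply ae_all_iff.2
    intro k
    filter_upwards [hv_nonneg k, ha_nonneg k, hb_nonneg k, hc_nonneg k] with ω h1 h2 h3 h4
    exact ⟨h1, h2, h3, h4⟩
  filter_upwards [ha_sum, hb_sum, ae_all_iff.2 key, haeall] with ω hsa hsb hkey h0
  have hv0 : ∀ k, 0 ≤ v k ω := fun k => (h0 k).1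
  have ha0 : ∀ k, 0 ≤ a k ω := fun k => (h0 k).2.1
  have hb0 : ∀ k, 0 ≤ b k ω := fun k => (h0 k).2.2.1
  have hc0 : ∀ k, 0 ≤ c k ω := fun k => (h0 k).2.2.2
  -- limit of A
  have hA_bddAbove : BddAbove (Set.range fun n => A n ω) := by
    refine ⟨Real.exp (∑' k, a k ω), ?_⟩
    rintro x ⟨n, rfl⟩
    calc A n ω = ∏ k ∈ Finset.range n, g k ω := rfl
      _ ≤ ∏ k ∈ Finset.range n, Real.exp (a k ω) := by
          apply Finset.prod_le_prod (fun k _ => by positivity)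
          intro k _
          apply max_le
          · exact Real.one_le_exp (ha0 k)
          · linarith [Real.add_one_le_exp (a k ω)]
      _ = Real.exp (∑ k ∈ Finset.range n, a k ω) := (Real.exp_sum _ _).symm
      _ ≤ Real.exp (∑' k, a k ω) :=
          Real.exp_le_exp.2 (hsa.sum_le_tsum _ (fun k _ => ha0 k))
  have hA_tend : Tendsto (fun n => A n ω) atTop (nhds (⨆ n, A n ω)) :=
    tendsto_atTop_ciSup (hA_mono ω) hA_bddAbove
  set Ainf : ℝ := ⨆ n, A n ω with hAinf
  have hAinf_le : ∀ n, A n ω ≤ Ainf := fun n => le_ciSup hA_bddAbove n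
  -- choose M
  obtain ⟨M, hM⟩ := exists_nat_ge (∑' k, b k ω)
  have hBleM : ∀ j, B (j + 1) ω ≤ M := by
    intro j
    calc B (j + 1) ω = ∑ k ∈ Finset.range (j + 1), b k ω * (A (k + 1) ω)⁻¹ := rfl
      _ ≤ ∑ k ∈ Finset.range (j + 1), b k ω := by
          apply Finset.sum_le_sum
          intro k _
          nlinarith [hb0 k, hAinv_le_one (k + 1) ω, hAinv_nonneg (k + 1) ω]
      _ ≤ ∑' k, b k ω := hsb.sum_le_tsum _ (fun k _ => hb0 k)
      _ ≤ M := hM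
  have hτ_eq : ∀ n, hittingBtwn (fun k ω => B (k + 1) ω) (Set.Ioi (M : ℝ)) 0 n ω = n := by
    intro n
    simp only [hittingBtwn]
    rw [if_neg]
    rintro ⟨j, _, hj⟩
    exact absurd hj (by simp only [Set.mem_Ioi, not_lt]; exact hBleM j)
  have hu_conv : ∃ L : ℝ, Tendsto (fun n => u n ω) atTop (nhds L) := by
    obtain ⟨L, hL⟩ := hkey M
    refine ⟨L, ?_⟩
    have heq : (fun n => u (min n (hittingBtwn (fun k ω => B (k + 1) ω)
        (Set.Ioi (M : ℝ)) 0 n ω)) ω) = fun n => u n ω := by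
      funext n
      rw [hτ_eq n, min_self]
    rwa [heq] at hL
  obtain ⟨L, hLt⟩ := hu_conv
  -- B converges
  have hB_mono : Monotone fun n => B n ω := by
    apply monotone_nat_of_le_succ
    intro n
    have h : B (n + 1) ω = B n ω + b n ω * (A (n + 1) ω)⁻¹ := Finset.sum_range_succ _ _
    nlinarith [hb0 n, hAinv_nonneg (n + 1) ω]
  have hB_bdd : BddAbove (Set.range fun n => B n ω) := by
    refine ⟨M, ?_⟩
    rintro x ⟨n, rfl⟩
    cases n with
    | zero => simp only [hB_def, Finset.range_zero, Finset.sum_empty]; exact_mod_cast Nat.zero_le M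
    | succ j => exact hBleM j
  have hB_t : Tendsto (fun n => B n ω) atTop (nhds (⨆ n, B n ω)) :=
    tendsto_atTop_ciSup hB_mono hB_bdd
  -- vA + C converges
  have hS_t : Tendsto (fun n => v n ω * (A n ω)⁻¹ + C n ω) atTop
      (nhds (L + ⨆ n, B n ω)) := by
    have heq : (fun n => v n ω * (A n ω)⁻¹ + C n ω) = fun n => u n ω + B n ω := by
      funext n
      simp only [hu_def]
      ring
    rw [heq]
    exact hLt.add hB_t
  -- C converges
  have hC_mono : Monotone fun n => C n ω := by
    apply monotone_nat_of_le_succ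
    intro n
    have h : C (n + 1) ω = C n ω + c n ω * (A (n + 1) ω)⁻¹ := Finset.sum_range_succ _ _
    nlinarith [hc0 n, hAinv_nonneg (n + 1) ω]
  have hC_bdd : BddAbove (Set.range fun n => C n ω) := by
    obtain ⟨K, hK⟩ := hS_t.bddAbove_range
    refine ⟨K, ?_⟩
    rintro x ⟨n, rfl⟩
    have h1 : 0 ≤ v n ω * (A n ω)⁻¹ := mul_nonneg (hv0 n) (hAinv_nonneg n ω)
    have h2 : v n ω * (A n ω)⁻¹ + C n ω ≤ K := hK ⟨n, rfl⟩
    linarith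
  have hC_t : Tendsto (fun n => C n ω) atTop (nhds (⨆ n, C n ω)) :=
    tendsto_atTop_ciSup hC_mono hC_bdd
  -- vA converges
  have hvA_t : Tendsto (fun n => v n ω * (A n ω)⁻¹) atTop
      (nhds (L + (⨆ n, B n ω) - ⨆ n, C n ω)) := by
    have := hS_t.sub hC_t
    simpa using this
  constructor
  · refine ⟨(L + (⨆ n, B n ω) - ⨆ n, C n ω) * Ainf, ?_⟩
    have hmul := hvA_t.mul hA_tend
    have heq : (fun n => v n ω * (A n ω)⁻¹ * A n ω) = fun n => v n ω := by
      funext n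
      field_simp [ne_of_gt (hA_pos n ω)]
    rwa [heq] at hmul
  · have hsum' : Summable (fun k => c k ω * (A (k + 1) ω)⁻¹) := by
      apply summable_of_sum_range_le (c := ⨆ n, C n ω)
      · intro k
        exact mul_nonneg (hc0 k) (hAinv_nonneg (k + 1) ω)
      · intro n
        exact le_ciSup hC_bdd n
    refine Summable.of_nonneg_of_le hc0 (fun k => ?_) (hsum'.mul_left Ainf)
    have ht : 0 ≤ c k ω * (A (k + 1) ω)⁻¹ := mul_nonneg (hc0 k) (hAinv_nonneg (k + 1) ω)
    have h2 : A (k + 1) ω * (c k ω * (A (k + 1) ω)⁻¹) ≤ Ainf * (c k ω * (A (k + 1) ω)⁻¹) :=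
      mul_le_mul_of_nonneg_right (hAinf_le (k + 1)) ht
    have h3 : A (k + 1) ω * (c k ω * (A (k + 1) ω)⁻¹) = c k ω := by
      field_simp
      exact mul_div_cancel_left₀ _ (hA_pos (k + 1) ω).ne'
    linarith
end

section
/- Let H be a real Hilbert space, a: H × H → ℝ a bounded coercive bilinear form, and b, b_n bounded linear functionals with b_n → b in operator norm. Let p_n solve a_n(p_n, φ) = b_n(φ) for all φ, where a_n are bilinear forms converging to a in the sense that |a_n(φ,ψ) − a(φ,ψ)| ≤ ε_n‖φ‖‖ψ‖ with ε_n → 0, and suppose ‖p_n‖ ≤ R uniformly and p_n ⇀ w weakly. Then a(w, φ) = b(φ) for all φ ∈ H; in particular, if the problem a(p,φ) = b(φ) has a unique solution p, then w = p. -/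
/-- Identification of the weak limit of the averaged adjoint states: if
`a_n → a` uniformly on bounded sets, `b_n → b` in operator norm, `p_n` solves
`a_n(p_n,φ) = b_n(φ)`, `‖p_n‖ ≤ R` and `p_n ⇀ w`, then `a(w,φ) = b(φ)` for all
`φ`; in particular `w` coincides with any solution of the limit problem (which
is unique by coercivity of `a`). -/
theorem stmt13 {H : Type*} [NormedAddCommGroup H] [InnerProductSpace ℝ H]
    [CompleteSpace H]
    (a : H →L[ℝ] H →L[ℝ] ℝ) (aN : ℕ → H → H → ℝ)
    (b : H →L[ℝ] ℝ) (bN : ℕ → H →L[ℝ] ℝ)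
    (k : ℝ) (hk : 0 < k) (hcoer : ∀ v : H, k * ‖v‖ ^ 2 ≤ a v v)
    (ε : ℕ → ℝ) (hε : Filter.Tendsto ε Filter.atTop (nhds 0))
    (haN : ∀ n (φ ψ : H), |aN n φ ψ - a φ ψ| ≤ ε n * ‖φ‖ * ‖ψ‖)
    (hbN : Filter.Tendsto (fun n => ‖bN n - b‖) Filter.atTop (nhds 0))
    (p : ℕ → H) (R : ℝ) (hpR : ∀ n, ‖p n‖ ≤ R)
    (hsol : ∀ n (φ : H), aN n (p n) φ = bN n φ)
    (w : H)
    (hweak : ∀ x : H, Filter.Tendsto (fun n => (inner ℝ (p n) x : ℝ))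
      Filter.atTop (nhds (inner ℝ w x))) :
    (∀ φ : H, a w φ = b φ) ∧ ∀ p' : H, (∀ φ : H, a p' φ = b φ) → w = p' := by
  have hR : (0:ℝ) ≤ R := le_trans (norm_nonneg _) (hpR 0)
  have hmain : ∀ φ : H, a w φ = b φ := by
    intro φ
    -- Riesz representation of v ↦ a v φ
    set x := (InnerProductSpace.toDual ℝ H).symm (a.flip φ) with hx
    have hax : ∀ v : H, a v φ = inner ℝ (v : H) x := by
      intro v
      rw [real_inner_comm]
      simp [hx, InnerProductSpace.toDual_symm_apply]
    have hreps : Filter.Tendsto (fun n => a (p n) φ) Filter.atTop (nhds (a w φ)) := by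
      simpa [hax] using hweak x
    have hdiff : Filter.Tendsto (fun n => aN n (p n) φ - a (p n) φ)
        Filter.atTop (nhds 0) := by
      refine squeeze_zero_norm (a := fun n => |ε n| * (R * ‖φ‖)) (fun n => ?_) ?_
      · calc ‖aN n (p n) φ - a (p n) φ‖ ≤ ε n * ‖p n‖ * ‖φ‖ := haN n (p n) φ
          _ ≤ |ε n| * R * ‖φ‖ := by
              apply mul_le_mul_of_nonneg_right _ (norm_nonneg φ)
              calc ε n * ‖p n‖ ≤ |ε n| * ‖p n‖ :=
                    mul_le_mul_of_nonneg_right (le_abs_self _) (norm_nonneg _)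
                _ ≤ |ε n| * R := mul_le_mul_of_nonneg_left (hpR n) (abs_nonneg _)
          _ = |ε n| * (R * ‖φ‖) := by ring
      · simpa using (hε.abs.mul_const (R * ‖φ‖))
    have h1 : Filter.Tendsto (fun n => aN n (p n) φ) Filter.atTop (nhds (a w φ)) := by
      have := hdiff.add hreps
      simpa using this
    have h2 : Filter.Tendsto (fun n => bN n φ) Filter.atTop (nhds (b φ)) := by
      have hd : Filter.Tendsto (fun n => bN n φ - b φ) Filter.atTop (nhds 0) := by
        refine squeeze_zero_norm (a := fun n => ‖bN n - b‖ * ‖φ‖) (fun n => ?_) ?_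
        · simpa using (bN n - b).le_opNorm φ
        · simpa using hbN.mul_const ‖φ‖
      have := hd.add tendsto_const_nhds (b := b φ)
      simpa using this
    have h1' : Filter.Tendsto (fun n => bN n φ) Filter.atTop (nhds (a w φ)) := by
      simpa [hsol] using h1
    exact tendsto_nhds_unique h1' h2
  refine ⟨hmain, fun p' hp' => ?_⟩
  have hz : a (w - p') (w - p') = 0 := by
    have : a (w - p') = a w - a p' := by rw [map_sub]
    rw [this]
    simp [hmain (w - p'), hp' (w - p')]
  have := hcoer (w - p')
  rw [hz] at this
  have hn : ‖w - p'‖ = 0 := by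
    by_contra h
    have hpos : 0 < ‖w - p'‖ := lt_of_le_of_ne (norm_nonneg _) (Ne.symm h)
    nlinarith [mul_pos hk (pow_pos hpos 2)]
  exact sub_eq_zero.mp (norm_eq_zero.mp hn)
end
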